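/- Fix p0 = 1/10. Let T ≥ 1 be an integer, set Δ = √(9p0/T), let k ∈ {0, 1, …, T}, and write μ̄ = k/T. If μ1, μ2 ∈ [p0, 3p0] satisfy |μ1 − μ̄| ≤ Δ and |μ2 − μ̄| ≤ Δ, then the Bernoulli likelihoods satisfy μ1^k (1−μ1)^{T−k} ≤ e^{36} · μ2^k (1−μ2)^{T−k}. -/

import Mathlib

/-- likelihood-ratio step of Lemma 8: with `p0 = 1/10` and
`Δ = √(9p0/T)`, any two Bernoulli parameters `μ1, μ2 ∈ [p0, 3p0]` that are within
distance `Δ` of the empirical mean `μ̄ = k/T` have Bernoulli likelihood ratio at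
most `e^{36}`. -/
theorem likelihood_ratio_bound
    (T k : ℕ) (hT : 1 ≤ T) (hk : k ≤ T)
    (μ1 μ2 : ℝ)
    (hμ1 : μ1 ∈ Set.Icc (1 / 10 : ℝ) (3 * (1 / 10)))
    (hμ2 : μ2 ∈ Set.Icc (1 / 10 : ℝ) (3 * (1 / 10)))
    (hd1 : |μ1 - (k : ℝ) / T| ≤ Real.sqrt (9 * (1 / 10) / T))
    (hd2 : |μ2 - (k : ℝ) / T| ≤ Real.sqrt (9 * (1 / 10) / T)) :
    μ1 ^ k * (1 - μ1) ^ (T - k) ≤ Real.exp 36 * (μ2 ^ k * (1 - μ2) ^ (T - k)) := by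
  obtain ⟨h1l, h1u⟩ := hμ1
  obtain ⟨h2l, h2u⟩ := hμ2
  have hTpos : (0:ℝ) < T := by exact_mod_cast hT
  have hμ1pos : (0:ℝ) < μ1 := by linarith
  have hμ2pos : (0:ℝ) < μ2 := by linarith
  have h1m : (0:ℝ) < 1 - μ1 := by linarith
  have h2m : (0:ℝ) < 1 - μ2 := by linarith
  set Δ := Real.sqrt (9 * (1 / 10) / T) with hΔdef
  have hΔnn : 0 ≤ Δ := Real.sqrt_nonneg _
  have hΔsq : Δ * Δ = 9 * (1 / 10) / T :=
    Real.mul_self_sqrt (by positivity)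
  have hn : ((T - k : ℕ) : ℝ) = (T : ℝ) - k := by
    push_cast [hk]; ring
  -- rewrite both sides as exponentials
  have e1 : μ1 ^ k * (1 - μ1) ^ (T - k)
      = Real.exp ((k : ℝ) * Real.log μ1 + ((T : ℝ) - k) * Real.log (1 - μ1)) := by
    rw [Real.exp_add, ← hn, Real.exp_nat_mul, Real.exp_nat_mul,
      Real.exp_log hμ1pos, Real.exp_log h1m]
  have e2 : μ2 ^ k * (1 - μ2) ^ (T - k)
      = Real.exp ((k : ℝ) * Real.log μ2 + ((T : ℝ) - k) * Real.log (1 - μ2)) := by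
    rw [Real.exp_add, ← hn, Real.exp_nat_mul, Real.exp_nat_mul,
      Real.exp_log hμ2pos, Real.exp_log h2m]
  rw [e1, e2, ← Real.exp_add, Real.exp_le_exp]
  -- log comparison via log x ≤ x - 1
  have l1 : Real.log μ1 - Real.log μ2 ≤ (μ1 - μ2) / μ2 := by
    have h := Real.log_le_sub_one_of_pos (show 0 < μ1 / μ2 by positivity)
    rw [Real.log_div (ne_of_gt hμ1pos) (ne_of_gt hμ2pos)] at h
    have : μ1 / μ2 - 1 = (μ1 - μ2) / μ2 := by field_simp
    linarith [this ▸ h]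
  have l2 : Real.log (1 - μ1) - Real.log (1 - μ2) ≤ (μ2 - μ1) / (1 - μ2) := by
    have h := Real.log_le_sub_one_of_pos (show 0 < (1 - μ1) / (1 - μ2) by positivity)
    rw [Real.log_div (ne_of_gt h1m) (ne_of_gt h2m)] at h
    have : (1 - μ1) / (1 - μ2) - 1 = (μ2 - μ1) / (1 - μ2) := by field_simp; ring
    linarith [this ▸ h]
  have hknn : (0:ℝ) ≤ (k : ℝ) := Nat.cast_nonneg k
  have hTknn : (0:ℝ) ≤ (T : ℝ) - k := by
    have : (k:ℝ) ≤ T := by exact_mod_cast hk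
    linarith
  -- key algebraic bound
  have habs1 : |μ1 - μ2| ≤ 2 * Δ := by
    have := abs_sub_abs_le_abs_sub μ1 μ2
    calc |μ1 - μ2| = |(μ1 - (k:ℝ)/T) - (μ2 - (k:ℝ)/T)| := by ring_nf
      _ ≤ |μ1 - (k:ℝ)/T| + |μ2 - (k:ℝ)/T| := abs_sub _ _
      _ ≤ 2 * Δ := by linarith
  have habs2 : |(k:ℝ)/T - μ2| ≤ Δ := by rw [abs_sub_comm]; exact hd2
  have hx : (μ1 - μ2) * ((k:ℝ)/T - μ2) ≤ 2 * Δ * Δ :=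
    calc (μ1 - μ2) * ((k:ℝ)/T - μ2) ≤ |(μ1 - μ2) * ((k:ℝ)/T - μ2)| := le_abs_self _
      _ = |μ1 - μ2| * |(k:ℝ)/T - μ2| := abs_mul _ _
      _ ≤ (2 * Δ) * Δ := mul_le_mul habs1 habs2 (abs_nonneg _) (by positivity)
  have hprod : (T:ℝ) * ((μ1 - μ2) * ((k:ℝ)/T - μ2)) ≤ 9/5 := by
    have h1 : (T:ℝ) * ((μ1 - μ2) * ((k:ℝ)/T - μ2)) ≤ (T:ℝ) * (2 * Δ * Δ) :=
      mul_le_mul_of_nonneg_left hx (le_of_lt hTpos)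
    have h2 : (T:ℝ) * (2 * Δ * Δ) = 9/5 := by
      rw [show (T:ℝ) * (2 * Δ * Δ) = 2 * ((Δ * Δ) * T) by ring, hΔsq]
      field_simp
      ring
    linarith
  have hc : (7:ℝ)/100 ≤ μ2 * (1 - μ2) := by nlinarith
  have hcpos : (0:ℝ) < μ2 * (1 - μ2) := by positivity
  have hfinal : (k:ℝ) * ((μ1 - μ2) / μ2) + ((T:ℝ) - k) * ((μ2 - μ1) / (1 - μ2)) ≤ 36 := by
    have eq1 : (k:ℝ) * ((μ1 - μ2) / μ2) + ((T:ℝ) - k) * ((μ2 - μ1) / (1 - μ2))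
        = ((T:ℝ) * ((μ1 - μ2) * ((k:ℝ)/T - μ2))) / (μ2 * (1 - μ2)) := by
      field_simp
      ring
    rw [eq1, div_le_iff₀ hcpos]
    linarith [hprod, hc]
  have s1 : (k:ℝ) * (Real.log μ1 - Real.log μ2) ≤ (k:ℝ) * ((μ1 - μ2) / μ2) :=
    mul_le_mul_of_nonneg_left l1 hknn
  have s2 : ((T:ℝ) - k) * (Real.log (1 - μ1) - Real.log (1 - μ2))
      ≤ ((T:ℝ) - k) * ((μ2 - μ1) / (1 - μ2)) :=
    mul_le_mul_of_nonneg_left l2 hTknn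
  linarith [s1, s2, hfinal]
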